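/- arXiv:1905.09435 — 2 statements merged into one kernel-verified Lean document; each statement's English description precedes it below -/
import Mathlib

section
/- Let {W^(k)} be i.i.d. random m×m symmetric doubly stochastic matrices and set ρ = ‖E[W^(1)ᵀ W^(1)] − J‖_2 (spectral norm), where J = (1/m)11ᵀ. Then for any fixed matrix B ∈ ℝ^{d×m} and any n ≥ 1, E[‖B(∏_{l=1}^n W^(l) − J)‖_F²] ≤ ρⁿ ‖B‖_F². -/
open Matrix BigOperators MeasureTheory

noncomputable section

instance matrixMeasurableSpace {d m : ℕ} : MeasurableSpace (Matrix (Fin d) (Fin m) ℝ) :=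
  MeasurableSpace.pi

def Jmat (m : ℕ) : Matrix (Fin m) (Fin m) ℝ := Matrix.of fun _ _ => (1 : ℝ) / m

def IsDoublyStochastic {m : ℕ} (W : Matrix (Fin m) (Fin m) ℝ) : Prop :=
  (∀ i j, 0 ≤ W i j) ∧ (∀ i, ∑ j, W i j = 1) ∧ (∀ j, ∑ i, W i j = 1)

def sqFrobNorm {d m : ℕ} (B : Matrix (Fin d) (Fin m) ℝ) : ℝ := ∑ i, ∑ j, (B i j)^2

def specNorm {m : ℕ} (A : Matrix (Fin m) (Fin m) ℝ) : ℝ :=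
  sSup {r : ℝ | ∃ x : Fin m → ℝ, (∑ i, (x i)^2) = 1 ∧ r = Real.sqrt (∑ i, ((A *ᵥ x) i)^2)}

def matExp {Ω : Type*} [MeasurableSpace Ω] (μ : Measure Ω) {d m : ℕ}
    (f : Ω → Matrix (Fin d) (Fin m) ℝ) : Matrix (Fin d) (Fin m) ℝ :=
  Matrix.of fun i j => ∫ ω, f ω i j ∂μ

section DS
variable {m : ℕ}

lemma ds_entry_le_one {W : Matrix (Fin m) (Fin m) ℝ} (h : IsDoublyStochastic W) (i j : Fin m) :
    W i j ≤ 1 := by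
  calc W i j ≤ ∑ j', W i j' :=
        Finset.single_le_sum (fun j' _ => h.1 i j') (Finset.mem_univ j)
    _ = 1 := h.2.1 i

lemma ds_mul {P W : Matrix (Fin m) (Fin m) ℝ} (hP : IsDoublyStochastic P)
    (hW : IsDoublyStochastic W) : IsDoublyStochastic (P * W) := by
  refine ⟨fun i j => ?_, fun i => ?_, fun j => ?_⟩
  · rw [Matrix.mul_apply]
    exact Finset.sum_nonneg fun k _ => mul_nonneg (hP.1 i k) (hW.1 k j)
  · simp only [Matrix.mul_apply]
    rw [Finset.sum_comm]
    simp_rw [← Finset.mul_sum]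
    simp [hW.2.1, hP.2.1 i]
  · simp only [Matrix.mul_apply]
    rw [Finset.sum_comm]
    simp_rw [← Finset.sum_mul]
    simp [hP.2.2, hW.2.2 j]

lemma ds_one : IsDoublyStochastic (1 : Matrix (Fin m) (Fin m) ℝ) := by
  refine ⟨fun i j => ?_, fun i => ?_, fun j => ?_⟩
  · by_cases h : i = j <;> simp [Matrix.one_apply, h]
  · simp [Matrix.one_apply]
  · simp [Matrix.one_apply]

lemma ds_transpose {W : Matrix (Fin m) (Fin m) ℝ} (h : IsDoublyStochastic W) :
    IsDoublyStochastic Wᵀ :=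
  ⟨fun i j => h.1 j i, fun i => h.2.2 i, fun j => h.2.1 j⟩

lemma mul_Jmat {W : Matrix (Fin m) (Fin m) ℝ} (hW : ∀ i, ∑ j, W i j = 1) :
    W * Jmat m = Jmat m := by
  ext i j
  simp only [Matrix.mul_apply, Jmat, Matrix.of_apply]
  rw [← Finset.sum_mul, hW i, one_mul]

lemma Jmat_mul {W : Matrix (Fin m) (Fin m) ℝ} (hW : ∀ j, ∑ i, W i j = 1) :
    Jmat m * W = Jmat m := by
  ext i j
  simp only [Matrix.mul_apply, Jmat, Matrix.of_apply]
  rw [← Finset.mul_sum, hW j, mul_one]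

lemma Jmat_mul_Jmat : Jmat m * Jmat m = Jmat m := by
  ext i j
  have hm : 0 < m := i.pos
  simp only [Matrix.mul_apply, Jmat, Matrix.of_apply, Finset.sum_const, Finset.card_univ,
    Fintype.card_fin, nsmul_eq_mul]
  field_simp

lemma Jmat_transpose : (Jmat m)ᵀ = Jmat m := by
  ext i j; simp [Jmat]

lemma sub_Jmat_mul_sub_Jmat {P Q : Matrix (Fin m) (Fin m) ℝ}
    (hP : ∀ i, ∑ j, P i j = 1) (hQ : IsDoublyStochastic Q) :
    (P - Jmat m) * (Q - Jmat m) = P * Q - Jmat m := by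
  rw [Matrix.sub_mul, Matrix.mul_sub, Matrix.mul_sub, mul_Jmat hP,
    Jmat_mul hQ.2.2, Jmat_mul_Jmat]
  abel

lemma sub_mul_sub_transpose {V : Matrix (Fin m) (Fin m) ℝ} (hV : IsDoublyStochastic V) :
    (V - Jmat m) * (V - Jmat m)ᵀ = V * Vᵀ - Jmat m := by
  rw [Matrix.transpose_sub, Jmat_transpose]
  exact sub_Jmat_mul_sub_Jmat hV.2.1 (ds_transpose hV)

end DS

section Spec
variable {m : ℕ}

lemma specNorm_bddAbove (A : Matrix (Fin m) (Fin m) ℝ) :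
    BddAbove {r : ℝ | ∃ x : Fin m → ℝ, (∑ i, (x i)^2) = 1 ∧
      r = Real.sqrt (∑ i, ((A *ᵥ x) i)^2)} := by
  refine ⟨Real.sqrt (∑ i, ∑ j, (A i j)^2), ?_⟩
  rintro r ⟨x, hx, rfl⟩
  apply Real.sqrt_le_sqrt
  have : ∀ i, ((A *ᵥ x) i)^2 ≤ ∑ j, (A i j)^2 := by
    intro i
    have h := Finset.sum_mul_sq_le_sq_mul_sq Finset.univ (fun j => A i j) x
    rw [hx, mul_one] at h
    simpa [Matrix.mulVec, dotProduct] using h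
  calc ∑ i, ((A *ᵥ x) i)^2 ≤ ∑ i, ∑ j, (A i j)^2 :=
        Finset.sum_le_sum fun i _ => this i
    _ = _ := rfl

lemma le_specNorm {A : Matrix (Fin m) (Fin m) ℝ} {x : Fin m → ℝ}
    (hx : (∑ i, (x i)^2) = 1) :
    Real.sqrt (∑ i, ((A *ᵥ x) i)^2) ≤ specNorm A :=
  le_csSup (specNorm_bddAbove A) ⟨x, hx, rfl⟩

lemma specNorm_nonneg (hm : 0 < m) (A : Matrix (Fin m) (Fin m) ℝ) : 0 ≤ specNorm A := by
  set x : Fin m → ℝ := fun k => if k = ⟨0, hm⟩ then (1:ℝ) else 0 with hxdef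
  have hx : (∑ i, (x i)^2) = 1 := by
    rw [Finset.sum_eq_single (⟨0, hm⟩ : Fin m)]
    · simp [hxdef]
    · intro b _ hb; simp [hxdef, hb]
    · simp
  exact le_trans (Real.sqrt_nonneg _) (le_specNorm hx)

/-- Key quadratic form bound: `xᵀ M x ≤ ‖M‖₂ ‖x‖²`. -/
lemma quad_le_specNorm (M : Matrix (Fin m) (Fin m) ℝ) (x : Fin m → ℝ) :
    ∑ k, ∑ k', x k * x k' * M k k' ≤ specNorm M * ∑ k, (x k)^2 := by
  have hLHS : ∑ k, ∑ k', x k * x k' * M k k' = ∑ k, x k * (M *ᵥ x) k := by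
    refine Finset.sum_congr rfl fun k _ => ?_
    simp only [Matrix.mulVec, dotProduct, Finset.mul_sum]
    exact Finset.sum_congr rfl fun k' _ => by ring
  rw [hLHS]
  set s := ∑ k, (x k)^2 with hs
  have hs0 : 0 ≤ s := Finset.sum_nonneg fun k _ => sq_nonneg _
  by_cases hsz : s = 0
  · have hxz : ∀ k, x k = 0 := by
      intro k
      have := (Finset.sum_eq_zero_iff_of_nonneg (fun k _ => sq_nonneg (x k))).1 hsz k
        (Finset.mem_univ k)
      exact pow_eq_zero_iff two_ne_zero |>.1 this
    have : ∑ k, x k * (M *ᵥ x) k = 0 :=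
      Finset.sum_eq_zero fun k _ => by rw [hxz k, zero_mul]
    rw [this, hsz, mul_zero]
  · have hspos : 0 < s := lt_of_le_of_ne hs0 (Ne.symm hsz)
    set c := Real.sqrt s with hc
    have hcpos : 0 < c := Real.sqrt_pos.2 hspos
    have hc2 : c^2 = s := Real.sq_sqrt hs0
    -- unit vector u = x / c
    set u : Fin m → ℝ := fun k => x k / c with hu
    have hunit : (∑ i, (u i)^2) = 1 := by
      simp only [hu, div_pow]
      rw [← Finset.sum_div, hc2]
      exact div_self hsz
    have hMu : ∀ i, (M *ᵥ u) i = (M *ᵥ x) i / c := by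
      intro i
      simp only [Matrix.mulVec, dotProduct, hu]
      rw [Finset.sum_div]
      exact Finset.sum_congr rfl fun j _ => by ring
    have hkey : Real.sqrt (∑ i, ((M *ᵥ x) i)^2) ≤ specNorm M * c := by
      have h1 : Real.sqrt (∑ i, ((M *ᵥ u) i)^2) ≤ specNorm M := le_specNorm hunit
      have h2 : ∑ i, ((M *ᵥ u) i)^2 = (∑ i, ((M *ᵥ x) i)^2) / c^2 := by
        simp only [hMu, div_pow]
        rw [← Finset.sum_div]
      rw [h2, Real.sqrt_div (Finset.sum_nonneg fun i _ => sq_nonneg _), Real.sqrt_sq hcpos.le]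
        at h1
      exact (div_le_iff₀ hcpos).1 h1
    set T := ∑ i, ((M *ᵥ x) i)^2 with hT
    have hT0 : 0 ≤ T := Finset.sum_nonneg fun i _ => sq_nonneg _
    have hCS : ∑ k, x k * (M *ᵥ x) k ≤ Real.sqrt s * Real.sqrt T := by
      have h := Finset.sum_mul_sq_le_sq_mul_sq Finset.univ x (fun k => (M *ᵥ x) k)
      calc ∑ k, x k * (M *ᵥ x) k ≤ |∑ k, x k * (M *ᵥ x) k| := le_abs_self _
        _ = Real.sqrt ((∑ k, x k * (M *ᵥ x) k)^2) := (Real.sqrt_sq_eq_abs _).symm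
        _ ≤ Real.sqrt (s * T) := Real.sqrt_le_sqrt h
        _ = Real.sqrt s * Real.sqrt T := Real.sqrt_mul hs0 _
    calc ∑ k, x k * (M *ᵥ x) k ≤ Real.sqrt s * Real.sqrt T := hCS
      _ ≤ Real.sqrt s * (specNorm M * c) :=
        mul_le_mul_of_nonneg_left hkey (Real.sqrt_nonneg s)
      _ = specNorm M * (c * c) := by rw [← hc]; ring
      _ = specNorm M * s := by rw [← hc2]; ring

end Spec

section Prob

variable {Ω : Type*} [MeasurableSpace Ω]

lemma integrable_of_abs_le {μ : Measure Ω} [IsProbabilityMeasure μ]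
    {g : Ω → ℝ} (hm : Measurable g) {K : ℝ} (hb : ∀ ω, |g ω| ≤ K) : Integrable g μ :=
  (integrable_const K).mono' hm.aestronglyMeasurable
    (Filter.Eventually.of_forall fun ω => by simpa [Real.norm_eq_abs] using hb ω)

lemma measurable_entry {d m : ℕ} {f : Ω → Matrix (Fin d) (Fin m) ℝ}
    (hf : Measurable f) (i : Fin d) (j : Fin m) : Measurable fun ω => f ω i j :=
  (measurable_pi_apply j).comp ((measurable_pi_apply i).comp hf)

lemma step_lemma (μ : Measure Ω) [IsProbabilityMeasure μ] {d m : ℕ}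
    (V : Ω → Matrix (Fin m) (Fin m) ℝ) (hVmeas : Measurable V)
    (hVds : ∀ ω, IsDoublyStochastic (V ω))
    (f : Ω → Matrix (Fin d) (Fin m) ℝ) (hfmeas : Measurable f)
    (K : ℝ) (hfbd : ∀ ω i k, |f ω i k| ≤ K)
    (hindep : ProbabilityTheory.IndepFun f V μ) :
    ∫ ω, sqFrobNorm (f ω * (V ω - Jmat m)) ∂μ ≤
      specNorm (matExp μ (fun ω => (V ω - Jmat m) * (V ω - Jmat m)ᵀ)) *
        ∫ ω, sqFrobNorm (f ω) ∂μ := by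
  set C : Ω → Matrix (Fin m) (Fin m) ℝ := fun ω => V ω - Jmat m with hC
  set M : Matrix (Fin m) (Fin m) ℝ := matExp μ (fun ω => C ω * (C ω)ᵀ) with hM
  -- measurability of entries
  have hfmeas' : ∀ (i : Fin d) (k : Fin m), Measurable fun ω => f ω i k :=
    fun i k => measurable_entry hfmeas i k
  have hCmeas : ∀ (k j : Fin m), Measurable fun ω => C ω k j := by
    intro k j
    simp only [hC, Matrix.sub_apply]
    exact (measurable_entry hVmeas k j).sub measurable_const
  -- bounds
  have hCbd : ∀ ω (k j : Fin m), |C ω k j| ≤ 2 := by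
    intro ω k j
    have h0 := (hVds ω).1 k j
    have h1 := ds_entry_le_one (hVds ω) k j
    have hm : (1:ℝ) ≤ m := by exact_mod_cast Nat.one_le_iff_ne_zero.2 k.pos.ne'
    have hJ0 : (0:ℝ) ≤ 1/m := by positivity
    have hJ1 : (1:ℝ)/m ≤ 1 := by
      rw [div_le_one (by linarith)]; linarith
    have : C ω k j = V ω k j - 1/m := by simp [hC, Jmat]
    rw [this, abs_le]; constructor <;> linarith
  have : Nonempty Ω := MeasureTheory.Measure.nonempty_of_neZero μ
  have hK0 : ∀ (_ : Fin d) (_ : Fin m), (0:ℝ) ≤ K := fun i k =>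
    le_trans (abs_nonneg _) (hfbd (Classical.arbitrary Ω) i k)
  -- integrability helpers
  have hfpair : ∀ (i : Fin d) (k k' : Fin m), Integrable (fun ω => f ω i k * f ω i k') μ := by
    intro i k k'
    refine integrable_of_abs_le ((hfmeas' i k).mul (hfmeas' i k')) (K := K*K) fun ω => ?_
    rw [abs_mul]
    exact mul_le_mul (hfbd ω i k) (hfbd ω i k') (abs_nonneg _) (hK0 i k)
  have hCpair : ∀ (k k' j : Fin m), Integrable (fun ω => C ω k j * C ω k' j) μ := by
    intro k k' j
    refine integrable_of_abs_le ((hCmeas k j).mul (hCmeas k' j)) (K := 4) fun ω => ?_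
    rw [abs_mul]
    calc |C ω k j| * |C ω k' j| ≤ 2 * 2 :=
          mul_le_mul (hCbd ω k j) (hCbd ω k' j) (abs_nonneg _) (by norm_num)
      _ = 4 := by norm_num
  have hterm : ∀ (i : Fin d) (k k' j : Fin m),
      Integrable (fun ω => (f ω i k * f ω i k') * (C ω k j * C ω k' j)) μ := by
    intro i k k' j
    refine integrable_of_abs_le
      (((hfmeas' i k).mul (hfmeas' i k')).mul ((hCmeas k j).mul (hCmeas k' j)))
      (K := K*K*4) fun ω => ?_
    rw [abs_mul, abs_mul, abs_mul]
    have h1 : |f ω i k| * |f ω i k'| ≤ K * K :=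
      mul_le_mul (hfbd ω i k) (hfbd ω i k') (abs_nonneg _) (hK0 i k)
    have h2 : |C ω k j| * |C ω k' j| ≤ 4 := by
      calc |C ω k j| * |C ω k' j| ≤ 2*2 :=
            mul_le_mul (hCbd ω k j) (hCbd ω k' j) (abs_nonneg _) (by norm_num)
        _ = 4 := by norm_num
    exact mul_le_mul h1 h2 (mul_nonneg (abs_nonneg _) (abs_nonneg _))
      (mul_nonneg (hK0 i k) (hK0 i k))
  -- pointwise expansion
  have expand : ∀ ω, sqFrobNorm (f ω * C ω) =
      ∑ i, ∑ j, ∑ k, ∑ k', (f ω i k * f ω i k') * (C ω k j * C ω k' j) := by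
    intro ω
    unfold sqFrobNorm
    refine Finset.sum_congr rfl fun i _ => Finset.sum_congr rfl fun j _ => ?_
    rw [Matrix.mul_apply, sq, Finset.sum_mul_sum]
    exact Finset.sum_congr rfl fun k _ => Finset.sum_congr rfl fun k' _ => by ring
  -- factorization by independence
  have hfactor : ∀ (i : Fin d) (k k' j : Fin m),
      ∫ ω, (f ω i k * f ω i k') * (C ω k j * C ω k' j) ∂μ =
        (∫ ω, f ω i k * f ω i k' ∂μ) * (∫ ω, C ω k j * C ω k' j ∂μ) := by
    intro i k k' j
    have hφ : Measurable (fun A : Matrix (Fin d) (Fin m) ℝ => A i k * A i k') :=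
      Measurable.mul (f := fun A : Matrix (Fin d) (Fin m) ℝ => A i k)
        (g := fun A : Matrix (Fin d) (Fin m) ℝ => A i k')
        ((measurable_pi_apply k).comp (measurable_pi_apply i))
        ((measurable_pi_apply k').comp (measurable_pi_apply i))
    have hψ : Measurable (fun A : Matrix (Fin m) (Fin m) ℝ =>
        (A k j - Jmat m k j) * (A k' j - Jmat m k' j)) :=
      Measurable.mul (f := fun A : Matrix (Fin m) (Fin m) ℝ => A k j - Jmat m k j)
        (g := fun A : Matrix (Fin m) (Fin m) ℝ => A k' j - Jmat m k' j)
      (Measurable.sub (f := fun A : Matrix (Fin m) (Fin m) ℝ => A k j)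
        (g := fun _ : Matrix (Fin m) (Fin m) ℝ => Jmat m k j)
        ((measurable_pi_apply j).comp (measurable_pi_apply k)) measurable_const)
        (Measurable.sub (f := fun A : Matrix (Fin m) (Fin m) ℝ => A k' j)
        (g := fun _ : Matrix (Fin m) (Fin m) ℝ => Jmat m k' j)
        ((measurable_pi_apply j).comp (measurable_pi_apply k')) measurable_const)
    have h := (hindep.comp hφ hψ).integral_fun_mul_eq_mul_integral
      ((hφ.comp hfmeas).aestronglyMeasurable) ((hψ.comp hVmeas).aestronglyMeasurable)
    simpa [Function.comp, hC, Matrix.sub_apply] using h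
  calc ∫ ω, sqFrobNorm (f ω * C ω) ∂μ
      = ∫ ω, ∑ i, ∑ j, ∑ k, ∑ k', (f ω i k * f ω i k') * (C ω k j * C ω k' j) ∂μ := by
        simp only [expand]
    _ = ∑ i, ∫ ω, ∑ j, ∑ k, ∑ k', (f ω i k * f ω i k') * (C ω k j * C ω k' j) ∂μ :=
        integral_finset_sum _ fun i _ => integrable_finset_sum _ fun j _ =>
          integrable_finset_sum _ fun k _ => integrable_finset_sum _ fun k' _ => hterm i k k' j
    _ = ∑ i, ∑ j, ∫ ω, ∑ k, ∑ k', (f ω i k * f ω i k') * (C ω k j * C ω k' j) ∂μ :=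
        Finset.sum_congr rfl fun i _ => integral_finset_sum _ fun j _ =>
          integrable_finset_sum _ fun k _ => integrable_finset_sum _ fun k' _ => hterm i k k' j
    _ = ∑ i, ∑ j, ∑ k, ∫ ω, ∑ k', (f ω i k * f ω i k') * (C ω k j * C ω k' j) ∂μ :=
        Finset.sum_congr rfl fun i _ => Finset.sum_congr rfl fun j _ =>
          integral_finset_sum _ fun k _ =>
            integrable_finset_sum _ fun k' _ => hterm i k k' j
    _ = ∑ i, ∑ j, ∑ k, ∑ k', ∫ ω, (f ω i k * f ω i k') * (C ω k j * C ω k' j) ∂μ :=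
        Finset.sum_congr rfl fun i _ => Finset.sum_congr rfl fun j _ =>
          Finset.sum_congr rfl fun k _ =>
            integral_finset_sum _ fun k' _ => hterm i k k' j
    _ = ∑ i, ∑ j, ∑ k, ∑ k',
          (∫ ω, f ω i k * f ω i k' ∂μ) * (∫ ω, C ω k j * C ω k' j ∂μ) := by
        simp only [hfactor]
    _ = ∑ i, ∑ k, ∑ k',
          (∫ ω, f ω i k * f ω i k' ∂μ) * (∑ j, ∫ ω, C ω k j * C ω k' j ∂μ) := by
        refine Finset.sum_congr rfl fun i _ => ?_
        rw [Finset.sum_comm]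
        refine Finset.sum_congr rfl fun k _ => ?_
        rw [Finset.sum_comm]
        exact Finset.sum_congr rfl fun k' _ => (Finset.mul_sum _ _ _).symm
    _ = ∑ i, ∑ k, ∑ k', (∫ ω, f ω i k * f ω i k' ∂μ) * M k k' := by
        refine Finset.sum_congr rfl fun i _ => Finset.sum_congr rfl fun k _ =>
          Finset.sum_congr rfl fun k' _ => ?_
        congr 1
        rw [← integral_finset_sum _ fun j _ => hCpair k k' j]
        simp only [hM, matExp, Matrix.of_apply, Matrix.mul_apply, Matrix.transpose_apply]
    _ = ∑ i, ∫ ω, ∑ k, ∑ k', (f ω i k * f ω i k') * M k k' ∂μ := by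
        refine Finset.sum_congr rfl fun i _ => ?_
        erw [integral_finset_sum _ fun k _ =>
          integrable_finset_sum _ fun k' _ => (hfpair i k k').mul_const _]
        refine Finset.sum_congr rfl fun k _ => ?_
        rw [integral_finset_sum _ fun k' _ => (hfpair i k k').mul_const _]
        exact Finset.sum_congr rfl fun k' _ =>
          (integral_mul_const (M k k') fun ω => f ω i k * f ω i k').symm
    _ ≤ ∑ i, ∫ ω, specNorm M * ∑ k, (f ω i k)^2 ∂μ := by
        refine Finset.sum_le_sum fun i _ => ?_
        refine integral_mono ?_ ?_ ?_
        · exact integrable_finset_sum _ fun k _ =>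
            integrable_finset_sum _ fun k' _ => (hfpair i k k').mul_const _
        · refine Integrable.const_mul ?_ _
          refine integrable_finset_sum _ fun k _ => ?_
          simpa [pow_two] using hfpair i k k
        · intro ω
          exact quad_le_specNorm M (fun k => f ω i k)
    _ = specNorm M * ∫ ω, sqFrobNorm (f ω) ∂μ := by
        simp_rw [integral_const_mul]
        rw [← Finset.mul_sum]
        congr 1
        rw [← integral_finset_sum _ fun i _ => integrable_finset_sum _ fun k _ =>
          (show Integrable (fun ω => (f ω i k)^2) μ by simpa [pow_two] using hfpair i k k)]
        simp [sqFrobNorm]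

lemma sub_Jmat_bound {m : ℕ} {V : Matrix (Fin m) (Fin m) ℝ} (hV : IsDoublyStochastic V)
    (k j : Fin m) : |(V - Jmat m) k j| ≤ 2 := by
  have h0 := hV.1 k j
  have h1 := ds_entry_le_one hV k j
  have hm : (1:ℝ) ≤ m := by exact_mod_cast Nat.one_le_iff_ne_zero.2 k.pos.ne'
  have hJ0 : (0:ℝ) ≤ 1/m := by positivity
  have hJ1 : (1:ℝ)/m ≤ 1 := by rw [div_le_one (by linarith)]; linarith
  have : (V - Jmat m) k j = V k j - 1/m := by simp [Jmat]
  rw [this, abs_le]; constructor <;> linarith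

lemma indepFun_const_left {β γ : Type*} {μ : Measure Ω}
    [IsProbabilityMeasure μ] [mβ : MeasurableSpace β] [mγ : MeasurableSpace γ]
    (c : β) (g : Ω → γ) : ProbabilityTheory.IndepFun (fun _ => c) g μ := by
  have h := ProbabilityTheory.indep_bot_left (MeasurableSpace.comap g mγ) (μ := μ)
  rw [← MeasurableSpace.comap_const (m := mβ) c] at h
  exact h

lemma measurable_listProd {m : ℕ} {α : Type*} (L : List α) :
    ∀ k j : Fin m, Measurable fun g : α → Matrix (Fin m) (Fin m) ℝ => ((L.map g).prod) k j := by
  induction L with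
  | nil =>
    intro k j
    simp only [List.map_nil, List.prod_nil]
    exact measurable_const
  | cons a t ih =>
    intro k j
    simp only [List.map_cons, List.prod_cons]
    have : (fun g : α → Matrix (Fin m) (Fin m) ℝ => (g a * (t.map g).prod) k j)
        = fun g => ∑ k'', g a k k'' * ((t.map g).prod) k'' j := by
      funext g; rw [Matrix.mul_apply]
    rw [this]
    exact Finset.measurable_sum _ fun k'' _ =>
      Measurable.mul (f := fun g : α → Matrix (Fin m) (Fin m) ℝ => g a k k'')
        (g := fun g : α → Matrix (Fin m) (Fin m) ℝ => ((t.map g).prod) k'' j)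
        ((measurable_pi_apply k'').comp
        ((measurable_pi_apply k).comp (measurable_pi_apply a))) (ih k'' j)

lemma measurable_B_mul_sub_J {d m : ℕ} {α : Type*} [MeasurableSpace α]
    (B : Matrix (Fin d) (Fin m) ℝ) {F : α → Matrix (Fin m) (Fin m) ℝ}
    (hF : ∀ k j, Measurable fun a => F a k j) :
    Measurable fun a => B * (F a - Jmat m) := by
  refine measurable_pi_lambda _ fun i => measurable_pi_lambda _ fun k => ?_
  have : (fun a => (B * (F a - Jmat m)) i k)
      = fun a => ∑ k'', B i k'' * (F a k'' k - Jmat m k'' k) := by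
    funext a; rw [Matrix.mul_apply]
    exact Finset.sum_congr rfl fun k'' _ => by rw [Matrix.sub_apply]
  rw [this]
  exact Finset.measurable_sum _ fun k'' _ =>
    measurable_const.mul ((hF k'' k).sub measurable_const)

lemma matExp_eq (μ : Measure Ω) [IsProbabilityMeasure μ] {m : ℕ}
    (W : ℕ → Ω → Matrix (Fin m) (Fin m) ℝ) (hmeas : ∀ k, Measurable (W k))
    (hsym : ∀ k ω, (W k ω).IsSymm) (hds : ∀ k ω, IsDoublyStochastic (W k ω))
    (hident : ∀ k, ProbabilityTheory.IdentDistrib (W k) (W 0) μ μ) (n : ℕ) :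
    matExp μ (fun ω => (W n ω - Jmat m) * (W n ω - Jmat m)ᵀ) =
      matExp μ (fun ω => (W 0 ω)ᵀ * W 0 ω) - Jmat m := by
  have hint : ∀ n' (k k' : Fin m), Integrable (fun ω => (W n' ω * (W n' ω)ᵀ) k k') μ := by
    intro n' k k'
    have hmeasE : Measurable fun ω => (W n' ω * (W n' ω)ᵀ) k k' := by
      have : (fun ω => (W n' ω * (W n' ω)ᵀ) k k')
          = fun ω => ∑ j, W n' ω k j * W n' ω k' j := by
        funext ω; rw [Matrix.mul_apply]
        exact Finset.sum_congr rfl fun j _ => by rw [Matrix.transpose_apply]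
      rw [this]
      exact Finset.measurable_sum _ fun j _ =>
        (measurable_entry (hmeas n') k j).mul (measurable_entry (hmeas n') k' j)
    refine integrable_of_abs_le hmeasE (K := 1) fun ω => ?_
    have h0 : 0 ≤ (W n' ω * (W n' ω)ᵀ) k k' := by
      rw [Matrix.mul_apply]
      exact Finset.sum_nonneg fun j _ =>
        mul_nonneg ((hds n' ω).1 k j) ((hds n' ω).1 k' j)
    have h1 : (W n' ω * (W n' ω)ᵀ) k k' ≤ 1 := by
      rw [Matrix.mul_apply]
      calc ∑ j, W n' ω k j * (W n' ω)ᵀ j k' ≤ ∑ j, W n' ω k j := by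
            refine Finset.sum_le_sum fun j _ => ?_
            have ha := ds_entry_le_one (hds n' ω) k' j
            have hb := (hds n' ω).1 k j
            have hc := (hds n' ω).1 k' j
            simp only [Matrix.transpose_apply]
            nlinarith
        _ = 1 := (hds n' ω).2.1 k
    rw [abs_le]; constructor <;> linarith
  ext k k'
  have hpt : ∀ ω, ((W n ω - Jmat m) * (W n ω - Jmat m)ᵀ) k k'
      = (W n ω * (W n ω)ᵀ) k k' - 1/m := by
    intro ω
    rw [sub_mul_sub_transpose (hds n ω)]
    simp [Jmat]
  have hid : ∫ ω, (W n ω * (W n ω)ᵀ) k k' ∂μ = ∫ ω, (W 0 ω * (W 0 ω)ᵀ) k k' ∂μ := by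
    have hu : Measurable fun A : Matrix (Fin m) (Fin m) ℝ => (A * Aᵀ) k k' := by
      have : (fun A : Matrix (Fin m) (Fin m) ℝ => (A * Aᵀ) k k')
          = fun A => ∑ j, A k j * A k' j := by
        funext A; rw [Matrix.mul_apply]
        exact Finset.sum_congr rfl fun j _ => by rw [Matrix.transpose_apply]
      rw [this]
      exact Finset.measurable_sum _ fun j _ =>
        Measurable.mul (f := fun A : Matrix (Fin m) (Fin m) ℝ => A k j)
          (g := fun A : Matrix (Fin m) (Fin m) ℝ => A k' j)
          ((measurable_pi_apply j).comp (measurable_pi_apply k))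
          ((measurable_pi_apply j).comp (measurable_pi_apply k'))
    exact ((hident n).comp hu).integral_eq
  calc (matExp μ (fun ω => (W n ω - Jmat m) * (W n ω - Jmat m)ᵀ)) k k'
      = ∫ ω, ((W n ω - Jmat m) * (W n ω - Jmat m)ᵀ) k k' ∂μ := rfl
    _ = ∫ ω, ((W n ω * (W n ω)ᵀ) k k' - 1/m) ∂μ := by simp only [hpt]
    _ = (∫ ω, (W n ω * (W n ω)ᵀ) k k' ∂μ) - 1/m := by
        rw [integral_sub (hint n k k') (integrable_const _), integral_const]
        simp [measure_univ]
    _ = (∫ ω, (W 0 ω * (W 0 ω)ᵀ) k k' ∂μ) - 1/m := by rw [hid]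
    _ = (∫ ω, ((W 0 ω)ᵀ * W 0 ω) k k' ∂μ) - 1/m := by
        congr 1
        refine integral_congr_ae (Filter.Eventually.of_forall fun ω => ?_)
        show (W 0 ω * (W 0 ω)ᵀ) k k' = ((W 0 ω)ᵀ * W 0 ω) k k'
        rw [(hsym 0 ω).eq]
    _ = (matExp μ (fun ω => (W 0 ω)ᵀ * W 0 ω) - Jmat m) k k' := by
        simp [matExp, Jmat]

end Prob

/-- Partial product of the random matrices. -/
def Wprod {Ω : Type*} {m : ℕ} (W : ℕ → Ω → Matrix (Fin m) (Fin m) ℝ) (n : ℕ) (ω : Ω) :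
    Matrix (Fin m) (Fin m) ℝ := ((List.range n).map (fun l => W l ω)).prod

/-- contraction lemma. For i.i.d. random symmetric doubly stochastic
matrices `W^(1), W^(2), ...` with `ρ = ‖E[W^(1)ᵀ W^(1)] − J‖₂`, any fixed `B ∈ ℝ^{d×m}`
and any `n ≥ 1`:  `E‖B(∏_{l=1}^n W^(l) − J)‖_F² ≤ ρⁿ ‖B‖_F²`. -/
theorem contraction_lemma {Ω : Type*} [MeasurableSpace Ω] (μ : Measure Ω)
    [IsProbabilityMeasure μ] {d m : ℕ}
    (W : ℕ → Ω → Matrix (Fin m) (Fin m) ℝ)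
    (hmeas : ∀ k, Measurable (W k))
    (hsym : ∀ k ω, (W k ω).IsSymm)
    (hds : ∀ k ω, IsDoublyStochastic (W k ω))
    (hindep : @ProbabilityTheory.iIndepFun _ _ _ _ (fun _ => matrixMeasurableSpace) W μ)
    (hident : ∀ k, ProbabilityTheory.IdentDistrib (W k) (W 0) μ μ)
    (ρ : ℝ) (hρ : ρ = specNorm (matExp μ (fun ω => (W 0 ω)ᵀ * (W 0 ω)) - Jmat m))
    (B : Matrix (Fin d) (Fin m) ℝ) (n : ℕ) (hn : 1 ≤ n) :
    ∫ ω, sqFrobNorm (B * (((List.range n).map (fun l => W l ω)).prod - Jmat m)) ∂μ ≤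
      ρ ^ n * sqFrobNorm B := by
  -- trivial case m = 0
  rcases Nat.eq_zero_or_pos m with hm | hm
  · subst hm
    simp [sqFrobNorm]
  -- from now on 0 < m
  have hρ0 : 0 ≤ ρ := hρ ▸ specNorm_nonneg hm _
  suffices h : ∀ N, 1 ≤ N →
      ∫ ω, sqFrobNorm (B * (Wprod W N ω - Jmat m)) ∂μ ≤ ρ ^ N * sqFrobNorm B by
    exact h n hn
  -- basic facts about Wprod
  have hPsucc : ∀ n' ω, Wprod W (n'+1) ω = Wprod W n' ω * W n' ω := by
    intro n' ω; simp [Wprod, List.range_succ]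
  have hPds : ∀ n' ω, IsDoublyStochastic (Wprod W n' ω) := by
    intro n'
    induction n' with
    | zero => intro ω; simpa [Wprod] using ds_one
    | succ n' ih => intro ω; rw [hPsucc]; exact ds_mul (ih ω) (hds n' ω)
  have hrec : ∀ n' ω, B * (Wprod W (n'+1) ω - Jmat m)
      = (B * (Wprod W n' ω - Jmat m)) * (W n' ω - Jmat m) := by
    intro n' ω
    rw [hPsucc n' ω, ← sub_Jmat_mul_sub_Jmat (hPds n' ω).2.1 (hds n' ω), ← Matrix.mul_assoc]
  -- measurability
  have hWtuple : Measurable (fun ω (l : ℕ) => W l ω) := measurable_pi_lambda _ hmeas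
  have hPentry : ∀ n' (k j : Fin m), Measurable fun ω => Wprod W n' ω k j := by
    intro n' k j
    exact (measurable_listProd (List.range n') k j).comp hWtuple
  have hfmeasMat : ∀ n', Measurable (fun ω => B * (Wprod W n' ω - Jmat m)) :=
    fun n' => measurable_B_mul_sub_J B (hPentry n')
  -- bounds
  have hSnn : (0:ℝ) ≤ ∑ i', ∑ k', |B i' k'| :=
    Finset.sum_nonneg fun i' _ => Finset.sum_nonneg fun k' _ => abs_nonneg _
  have hrowbd : ∀ (i : Fin d), (∑ k', |B i k'|) ≤ ∑ i', ∑ k', |B i' k'| :=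
    fun i => Finset.single_le_sum (f := fun i' => ∑ k', |B i' k'|)
      (fun i' _ => Finset.sum_nonneg fun k' _ => abs_nonneg _) (Finset.mem_univ i)
  have hfbd : ∀ n' ω (i : Fin d) (k : Fin m),
      |(B * (Wprod W n' ω - Jmat m)) i k| ≤ (∑ i', ∑ k', |B i' k'|) * 2 := by
    intro n' ω i k
    rw [Matrix.mul_apply]
    calc |∑ k'', B i k'' * (Wprod W n' ω - Jmat m) k'' k|
        ≤ ∑ k'', |B i k'' * (Wprod W n' ω - Jmat m) k'' k| :=
          Finset.abs_sum_le_sum_abs _ _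
      _ ≤ ∑ k'', |B i k''| * 2 := by
          refine Finset.sum_le_sum fun k'' _ => ?_
          rw [abs_mul]
          exact mul_le_mul_of_nonneg_left (sub_Jmat_bound (hPds n' ω) k'' k) (abs_nonneg _)
      _ = (∑ k'', |B i k''|) * 2 := by rw [Finset.sum_mul]
      _ ≤ (∑ i', ∑ k', |B i' k'|) * 2 :=
          mul_le_mul_of_nonneg_right (hrowbd i) (by norm_num)
  have hBconstbd : ∀ (_ : Ω) (i : Fin d) (k : Fin m),
      |B i k| ≤ (∑ i', ∑ k', |B i' k'|) * 2 := by
    intro _ i k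
    have h1 : |B i k| ≤ ∑ k', |B i k'| :=
      Finset.single_le_sum (f := fun k' => |B i k'|) (fun k' _ => abs_nonneg _)
        (Finset.mem_univ k)
    have h2 := hrowbd i
    linarith
  -- independence
  have hIndepStep : ∀ n', ProbabilityTheory.IndepFun
      (fun ω => B * (Wprod W n' ω - Jmat m)) (W n') μ := by
    intro n'
    have hdisj : Disjoint (Finset.range n') ({n'} : Finset ℕ) := by
      simp [Finset.disjoint_singleton_right]
    have hpair := hindep.indepFun_finset (Finset.range n') {n'} hdisj hmeas
    set e : Fin n' → {x // x ∈ Finset.range n'} :=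
      fun l => ⟨l.1, Finset.mem_range.2 l.2⟩ with he
    set φ : ({x // x ∈ Finset.range n'} → Matrix (Fin m) (Fin m) ℝ) →
        Matrix (Fin d) (Fin m) ℝ :=
      fun g => B * (((((List.finRange n').map e).map g)).prod - Jmat m) with hφdef
    have hφ : Measurable φ :=
      measurable_B_mul_sub_J B (fun k j => measurable_listProd ((List.finRange n').map e) k j)
    have hψ : Measurable (fun g : {x // x ∈ ({n'} : Finset ℕ)} → Matrix (Fin m) (Fin m) ℝ =>
        g ⟨n', Finset.mem_singleton_self n'⟩) := measurable_pi_apply _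
    have h := hpair.comp hφ hψ
    have e1 : (φ ∘ fun ω (i : {x // x ∈ Finset.range n'}) => W i.1 ω)
        = fun ω => B * (Wprod W n' ω - Jmat m) := by
      funext ω
      show B * ((((List.finRange n').map e).map (fun i => W i.1 ω)).prod - Jmat m) = _
      have hl : ((List.finRange n').map e).map (fun i : {x // x ∈ Finset.range n'} => W i.1 ω)
          = (List.range n').map (fun l => W l ω) := by
        rw [List.map_map, ← List.map_coe_finRange_eq_range (n := n'), List.map_map]
        rfl
      rw [hl]
      rfl
    have e2 : ((fun g : {x // x ∈ ({n'} : Finset ℕ)} → Matrix (Fin m) (Fin m) ℝ =>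
        g ⟨n', Finset.mem_singleton_self n'⟩) ∘
          fun ω (i : {x // x ∈ ({n'} : Finset ℕ)}) => W i.1 ω) = W n' := rfl
    rw [e1, e2] at h
    exact h
  -- induction
  intro N hN
  induction N, hN using Nat.le_induction with
  | base =>
    have h1 : ∀ ω, Wprod W 1 ω = W 0 ω := by
      intro ω; simp [Wprod, List.range_succ]
    have hstep := step_lemma μ (W 0) (hmeas 0) (hds 0) (fun _ => B) measurable_const
      ((∑ i', ∑ k', |B i' k'|) * 2) hBconstbd (indepFun_const_left B (W 0))
    rw [matExp_eq μ W hmeas hsym hds hident 0, ← hρ] at hstep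
    simp only [h1, pow_one]
    calc ∫ ω, sqFrobNorm (B * (W 0 ω - Jmat m)) ∂μ
        ≤ ρ * ∫ (_ : Ω), sqFrobNorm B ∂μ := hstep
      _ = ρ * sqFrobNorm B := by rw [integral_const]; simp [measure_univ]
  | succ n' hn' ih =>
    calc ∫ ω, sqFrobNorm (B * (Wprod W (n'+1) ω - Jmat m)) ∂μ
        = ∫ ω, sqFrobNorm ((B * (Wprod W n' ω - Jmat m)) * (W n' ω - Jmat m)) ∂μ := by
          simp only [hrec]
      _ ≤ specNorm (matExp μ (fun ω => (W n' ω - Jmat m) * (W n' ω - Jmat m)ᵀ)) *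
            ∫ ω, sqFrobNorm (B * (Wprod W n' ω - Jmat m)) ∂μ :=
          step_lemma μ (W n') (hmeas n') (hds n') _ (hfmeasMat n')
            ((∑ i', ∑ k', |B i' k'|) * 2) (hfbd n') (hIndepStep n')
      _ = ρ * ∫ ω, sqFrobNorm (B * (Wprod W n' ω - Jmat m)) ∂μ := by
          rw [matExp_eq μ W hmeas hsym hds hident n', ← hρ]
      _ ≤ ρ * (ρ ^ n' * sqFrobNorm B) := mul_le_mul_of_nonneg_left ih hρ0
      _ = ρ ^ (n'+1) * sqFrobNorm B := by ring
end
end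

section
/- Let L̄ be a symmetric PSD matrix with L̄1 = 0 whose eigenvalues satisfy 0 < λ_2 ≤ ... ≤ λ_m on the orthogonal complement of 1, and let L̃ be a symmetric PSD matrix with spectral norm ζ ≥ 0. Then for any α ∈ (0, min{2λ_2/(λ_2² + 2ζ), 2λ_m/(λ_m² + 2ζ)}), the spectral norm of (I − αL̄)² + 2α²L̃ − (1/m)11ᵀ is strictly less than 1. -/
open Matrix BigOperators

noncomputable section

lemma quad_le_specNorm_s7 {m : ℕ} (L : Matrix (Fin m) (Fin m) ℝ) (ζ : ℝ)
    (hζ : specNorm L = ζ) (z : Fin m → ℝ) :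
    z ⬝ᵥ (L *ᵥ z) ≤ ζ * ∑ i, z i ^ 2 := by
  have hbdd : BddAbove {r : ℝ | ∃ x : Fin m → ℝ, (∑ i, (x i)^2) = 1 ∧
      r = Real.sqrt (∑ i, ((L *ᵥ x) i)^2)} := by
    refine ⟨Real.sqrt (∑ i, ∑ j, L i j ^ 2), ?_⟩
    rintro r ⟨x, hx, rfl⟩
    apply Real.sqrt_le_sqrt
    have : ∀ i, ((L *ᵥ x) i)^2 ≤ ∑ j, L i j ^ 2 := by
      intro i
      have := Finset.sum_mul_sq_le_sq_mul_sq Finset.univ (fun j => L i j) x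
      simpa [Matrix.mulVec, dotProduct, hx] using this
    exact Finset.sum_le_sum fun i _ => this i
  -- unit vector bound
  have hunit : ∀ u : Fin m → ℝ, (∑ i, (u i)^2) = 1 → u ⬝ᵥ (L *ᵥ u) ≤ ζ := by
    intro u hu
    have hmem : Real.sqrt (∑ i, ((L *ᵥ u) i)^2) ≤ ζ := by
      rw [← hζ]
      exact le_csSup hbdd ⟨u, hu, rfl⟩
    have hcs : (u ⬝ᵥ (L *ᵥ u))^2 ≤ (∑ i, (u i)^2) * ∑ i, ((L *ᵥ u) i)^2 := by
      simpa [dotProduct] using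
        Finset.sum_mul_sq_le_sq_mul_sq Finset.univ u (fun i => (L *ᵥ u) i)
    have h1 : u ⬝ᵥ (L *ᵥ u) ≤ Real.sqrt (∑ i, ((L *ᵥ u) i)^2) := by
      rw [hu, one_mul] at hcs
      calc u ⬝ᵥ (L *ᵥ u) ≤ |u ⬝ᵥ (L *ᵥ u)| := le_abs_self _
        _ = Real.sqrt ((u ⬝ᵥ (L *ᵥ u))^2) := (Real.sqrt_sq_eq_abs _).symm
        _ ≤ Real.sqrt (∑ i, ((L *ᵥ u) i)^2) := Real.sqrt_le_sqrt hcs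
    exact h1.trans hmem
  rcases eq_or_lt_of_le (Finset.sum_nonneg fun i _ => sq_nonneg (z i)) with h0 | hpos
  · -- ∑ z² = 0 → z = 0
    have hz : z = 0 := by
      funext i
      have := (Finset.sum_eq_zero_iff_of_nonneg (fun i _ => sq_nonneg (z i))).mp h0.symm i
        (Finset.mem_univ i)
      exact pow_eq_zero_iff (two_ne_zero) |>.mp this
    subst hz
    simp
  · set n := Real.sqrt (∑ i, z i ^ 2) with hn
    have hnpos : 0 < n := Real.sqrt_pos.mpr hpos
    have hn2 : n ^ 2 = ∑ i, z i ^ 2 := Real.sq_sqrt hpos.le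
    set u : Fin m → ℝ := n⁻¹ • z with hu
    have husum : (∑ i, (u i)^2) = 1 := by
      simp only [hu, Pi.smul_apply, smul_eq_mul, mul_pow, ← Finset.mul_sum]
      rw [← hn2]
      field_simp
    have hscale : z ⬝ᵥ (L *ᵥ z) = n^2 * (u ⬝ᵥ (L *ᵥ u)) := by
      simp only [hu, Matrix.mulVec_smul, dotProduct_smul, smul_dotProduct,
        smul_eq_mul]
      field_simp
    rw [hscale, ← hn2]
    have := hunit u husum
    nlinarith [sq_nonneg n]

lemma sq_le_max {a t b μ : ℝ} (h1 : a ≤ t) (h2 : t ≤ b) (ha : a^2 ≤ μ) (hb : b^2 ≤ μ) :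
    t^2 ≤ μ := by
  rcases le_total 0 t with ht | ht
  · nlinarith
  · nlinarith

lemma rowsum_zero {m : ℕ} (L : Matrix (Fin m) (Fin m) ℝ) (hsym : Lᵀ = L)
    (hker : L *ᵥ (fun _ => (1 : ℝ)) = 0) (v : Fin m → ℝ) :
    ∑ i, (L *ᵥ v) i = 0 := by
  have h1 : ∑ i, (L *ᵥ v) i = (fun _ => (1:ℝ)) ⬝ᵥ (L *ᵥ v) := by
    simp [dotProduct]
  rw [h1, Matrix.dotProduct_mulVec]
  have h2 : (fun _ => (1:ℝ)) ᵥ* L = 0 := by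
    rw [← Matrix.mulVec_transpose, hsym, hker]
  rw [h2]
  simp

set_option maxHeartbeats 1000000 in
lemma spectral_bound {m : ℕ}
    (Lbar : Matrix (Fin m) (Fin m) ℝ) (hLbar : Lbar.PosSemidef)
    (hker : Lbar *ᵥ (fun _ => (1 : ℝ)) = 0)
    (lam2 lamM : ℝ) (hlam2 : 0 < lam2)
    (hspec : ∀ x : Fin m → ℝ, (∑ i, x i) = 0 →
      lam2 * (∑ i, (x i)^2) ≤ x ⬝ᵥ (Lbar *ᵥ x) ∧
      x ⬝ᵥ (Lbar *ᵥ x) ≤ lamM * (∑ i, (x i)^2))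
    (α : ℝ) (hα0 : 0 ≤ α) (μ : ℝ)
    (hμ2 : (1 - α * lam2)^2 ≤ μ) (hμM : (1 - α * lamM)^2 ≤ μ)
    (y : Fin m → ℝ) (hy : ∑ i, y i = 0) :
    ∑ i, ((((1 : Matrix (Fin m) (Fin m) ℝ) - α • Lbar) *ᵥ y) i)^2 ≤ μ * ∑ i, y i ^ 2 := by
  classical
  have hμ0 : 0 ≤ μ := le_trans (sq_nonneg _) hμ2
  have hsym : Lbarᵀ = Lbar := by
    have h := hLbar.1
    simpa [Matrix.IsHermitian] using h
  have hH : Lbar.IsHermitian := hLbar.1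
  set b := hH.eigenvectorBasis with hb
  set ev := hH.eigenvalues with hev
  set B : Fin m → Fin m → ℝ := fun i j => b i j with hB
  have hinner : ∀ u v : EuclideanSpace ℝ (Fin m), (inner ℝ u v : ℝ) = ∑ i, u i * v i := by
    intro u v
    simp [PiLp.inner_apply, RCLike.inner_apply, conj_trivial, mul_comm]
  have hmv : ∀ i, Lbar *ᵥ B i = ev i • B i := fun i => hH.mulVec_eigenvectorBasis i
  have hMb : ∀ i, ((1 : Matrix (Fin m) (Fin m) ℝ) - α • Lbar) *ᵥ B i
      = (1 - α * ev i) • B i := by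
    intro i
    rw [Matrix.sub_mulVec, Matrix.one_mulVec, Matrix.smul_mulVec, hmv i, sub_smul, one_smul,
      smul_smul]
  have hsymM : ((1 : Matrix (Fin m) (Fin m) ℝ) - α • Lbar)ᵀ = 1 - α • Lbar := by
    simp [Matrix.transpose_sub, Matrix.transpose_smul, hsym]
  set c : Fin m → ℝ := fun i => b.repr (WithLp.toLp 2 y) i with hc
  set d : Fin m → ℝ := fun i => (1 - α * ev i) * c i with hd
  -- Parseval
  have hPars : ∀ v : EuclideanSpace ℝ (Fin m), ∑ i, (v i)^2 = ∑ i, (b.repr v i)^2 := by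
    intro v
    have h1 : (inner ℝ v v : ℝ) = inner ℝ (b.repr v) (b.repr v) :=
      ((b.repr : EuclideanSpace ℝ (Fin m) ≃ₗᵢ[ℝ] EuclideanSpace ℝ (Fin m)).inner_map_map v v).symm
    rw [hinner, hinner] at h1
    simpa [pow_two] using h1
  have hcval : ∀ i, c i = B i ⬝ᵥ y := by
    intro i
    show b.repr (WithLp.toLp 2 y) i = B i ⬝ᵥ y
    rw [b.repr_apply_apply, hinner]
    rfl
  -- repr of the image vector
  have hrw : ∀ i, b.repr (WithLp.toLp 2 (((1 : Matrix (Fin m) (Fin m) ℝ) - α • Lbar) *ᵥ y)) i = d i := by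
    intro i
    rw [b.repr_apply_apply, hinner]
    calc ∑ j, b i j * (((1 : Matrix (Fin m) (Fin m) ℝ) - α • Lbar) *ᵥ y) j
        = B i ⬝ᵥ (((1 : Matrix (Fin m) (Fin m) ℝ) - α • Lbar) *ᵥ y) := rfl
      _ = ((1 - α * ev i) • B i) ⬝ᵥ y := by
          rw [Matrix.dotProduct_mulVec, ← Matrix.mulVec_transpose, hsymM, hMb i]
      _ = (1 - α * ev i) * (B i ⬝ᵥ y) := by
          simp [smul_dotProduct]
      _ = (1 - α * ev i) * c i := by rw [hcval i]
      _ = d i := rfl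
  -- unit norm of eigenvectors
  have hbnorm : ∀ i, ∑ j, (B i j)^2 = 1 := by
    intro i
    have h1 : (inner ℝ (b i) (b i) : ℝ) = 1 := by
      have h2 := b.orthonormal
      rw [orthonormal_iff_ite] at h2
      simpa using h2 i i
    rw [hinner] at h1
    calc ∑ j, (B i j)^2 = ∑ j, b i j * b i j := by
          exact Finset.sum_congr rfl fun j _ => by rw [pow_two]
      _ = 1 := h1
  -- eigenvalue * (sum of entries) = 0
  have hevt : ∀ i, ev i * (∑ j, B i j) = 0 := by
    intro i
    have h1 : ∑ j, (Lbar *ᵥ B i) j = 0 := rowsum_zero Lbar hsym hker _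
    rw [hmv i] at h1
    simpa [Finset.mul_sum] using h1
  -- per-index bound
  have hterm : ∀ i, d i ^ 2 ≤ μ * c i ^ 2 := by
    intro i
    by_cases h0 : ev i = 0
    · -- kernel case: c i = 0
      have hm : (0:ℝ) < m := by exact_mod_cast i.pos
      set t : ℝ := ∑ j, B i j with ht
      set w : Fin m → ℝ := fun j => B i j - t / m with hwdef
      have hwsum : ∑ j, w j = 0 := by
        simp only [hwdef, Finset.sum_sub_distrib, Finset.sum_const, Finset.card_univ,
          Fintype.card_fin, nsmul_eq_mul]
        field_simp
        simp [ht]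
      have hLb0 : Lbar *ᵥ B i = 0 := by rw [hmv i, h0, zero_smul]
      have hLw : Lbar *ᵥ w = 0 := by
        have hweq : w = B i - (t/m) • (fun _ => (1:ℝ)) := by
          funext j; simp [hwdef]
        rw [hweq, Matrix.mulVec_sub, Matrix.mulVec_smul, hLb0, hker, smul_zero, sub_zero]
      have hq0 : w ⬝ᵥ (Lbar *ᵥ w) = 0 := by rw [hLw, dotProduct_zero]
      have hw2 : ∑ j, (w j)^2 = 0 := by
        have h1 := (hspec w hwsum).1
        rw [hq0] at h1
        have h2 : 0 ≤ ∑ j, (w j)^2 := Finset.sum_nonneg fun j _ => sq_nonneg _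
        nlinarith
      have hci : c i = 0 := by
        have h4 : c i = ∑ j, w j * y j := by
          rw [hcval i]
          have h5 : ∀ j, B i j * y j = w j * y j + (t/m) * y j := by
            intro j; simp [hwdef]; ring
          calc B i ⬝ᵥ y = ∑ j, B i j * y j := rfl
            _ = ∑ j, (w j * y j + (t/m) * y j) := Finset.sum_congr rfl fun j _ => h5 j
            _ = ∑ j, w j * y j + (t/m) * ∑ j, y j := by
                rw [Finset.sum_add_distrib, ← Finset.mul_sum]
            _ = ∑ j, w j * y j := by rw [hy, mul_zero, add_zero]
        have h5 : (c i)^2 ≤ 0 := by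
          have h6 := Finset.sum_mul_sq_le_sq_mul_sq Finset.univ w y
          rw [← h4, hw2, zero_mul] at h6
          exact h6
        nlinarith [sq_nonneg (c i)]
      have : d i = 0 := by rw [hd]; simp [hci]
      rw [this, hci]
      simp
    · -- eigenvalue in [lam2, lamM]
      have ht : ∑ j, B i j = 0 := by
        rcases mul_eq_zero.mp (hevt i) with h | h
        · exact absurd h h0
        · exact h
      have hq : B i ⬝ᵥ (Lbar *ᵥ B i) = ev i := by
        rw [hmv i]
        have h7 : B i ⬝ᵥ (ev i • B i) = ev i * ∑ j, (B i j)^2 := by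
          simp only [dotProduct, Pi.smul_apply, smul_eq_mul, Finset.mul_sum]
          exact Finset.sum_congr rfl fun j _ => by ring
        rw [h7, hbnorm i, mul_one]
      have hs := hspec (B i) ht
      rw [hq, hbnorm i, mul_one, mul_one] at hs
      have hev2 : (1 - α * ev i)^2 ≤ μ := by
        apply sq_le_max (a := 1 - α * lamM) (b := 1 - α * lam2) _ _ hμM hμ2
        · nlinarith [hs.2]
        · nlinarith [hs.1]
      have h8 : d i ^ 2 = (1 - α * ev i)^2 * (c i)^2 := by rw [hd]; ring
      rw [h8]
      nlinarith [sq_nonneg (c i)]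
  -- assemble
  calc ∑ i, ((((1 : Matrix (Fin m) (Fin m) ℝ) - α • Lbar) *ᵥ y) i)^2
      = ∑ i, (b.repr (WithLp.toLp 2 (((1 : Matrix (Fin m) (Fin m) ℝ) - α • Lbar) *ᵥ y)) i)^2 :=
        hPars (WithLp.toLp 2 (((1 : Matrix (Fin m) (Fin m) ℝ) - α • Lbar) *ᵥ y))
    _ = ∑ i, (d i)^2 := by
        exact Finset.sum_congr rfl fun i _ => by rw [hrw i]
    _ ≤ ∑ i, μ * (c i)^2 := Finset.sum_le_sum fun i _ => hterm i
    _ = μ * ∑ i, (c i)^2 := by rw [← Finset.mul_sum]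
    _ = μ * ∑ i, y i ^ 2 := congrArg (μ * ·) (hPars (WithLp.toLp 2 y)).symm

set_option maxHeartbeats 1000000 in
/-- let `L̄` be symmetric PSD with `L̄ 1 = 0` and spectrum contained in
`[λ₂, λ_m]` (with `0 < λ₂ ≤ λ_m`) on the orthogonal complement of `1`, and let `L̃` be
symmetric PSD with spectral norm `ζ ≥ 0`. Then for every
`α ∈ (0, min{2λ₂/(λ₂² + 2ζ), 2λ_m/(λ_m² + 2ζ)})`, the spectral norm of
`(I − αL̄)² + 2α²L̃ − (1/m)11ᵀ` is strictly less than 1. -/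
theorem spectral_norm_lt_one {m : ℕ}
    (Lbar Ltil : Matrix (Fin m) (Fin m) ℝ)
    (hLbar : Lbar.PosSemidef) (hLtil : Ltil.PosSemidef)
    (hker : Lbar *ᵥ (fun _ => (1 : ℝ)) = 0)
    (lam2 lamM : ℝ) (hlam2 : 0 < lam2) (hle : lam2 ≤ lamM)
    (hspec : ∀ x : Fin m → ℝ, (∑ i, x i) = 0 →
      lam2 * (∑ i, (x i)^2) ≤ x ⬝ᵥ (Lbar *ᵥ x) ∧
      x ⬝ᵥ (Lbar *ᵥ x) ≤ lamM * (∑ i, (x i)^2))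
    (ζ : ℝ) (hζ : 0 ≤ ζ) (hζspec : specNorm Ltil = ζ)
    (α : ℝ)
    (hα : α ∈ Set.Ioo (0 : ℝ)
      (min (2 * lam2 / (lam2 ^ 2 + 2 * ζ)) (2 * lamM / (lamM ^ 2 + 2 * ζ)))) :
    specNorm ((1 - α • Lbar) ^ 2 + (2 * α ^ 2) • Ltil - Jmat m) < 1 := by
  obtain ⟨hα0, hαlt⟩ := hα
  have hlamM : 0 < lamM := lt_of_lt_of_le hlam2 hle
  set μ : ℝ := max ((1 - α * lam2)^2) ((1 - α * lamM)^2) with hμ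
  set cst : ℝ := μ + 2 * α^2 * ζ with hcst
  have hd2 : 0 < lam2^2 + 2*ζ := by positivity
  have hdM : 0 < lamM^2 + 2*ζ := by positivity
  have h2 : α * (lam2^2 + 2*ζ) < 2 * lam2 := by
    have h := lt_of_lt_of_le hαlt (min_le_left _ _)
    rwa [lt_div_iff₀ hd2] at h
  have hMM : α * (lamM^2 + 2*ζ) < 2 * lamM := by
    have h := lt_of_lt_of_le hαlt (min_le_right _ _)
    rwa [lt_div_iff₀ hdM] at h
  have hμ0 : 0 ≤ μ := le_trans (sq_nonneg _) (le_max_left _ _)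
  have hc0 : 0 ≤ cst := by
    rw [hcst]
    have : 0 ≤ 2 * α^2 * ζ := by positivity
    linarith
  have hc1 : cst < 1 := by
    rw [hcst, hμ]
    rcases max_cases ((1 - α * lam2)^2) ((1 - α * lamM)^2) with ⟨h, _⟩ | ⟨h, _⟩ <;> rw [h] <;>
      nlinarith [mul_pos hα0 (show (0:ℝ) < 2*lam2 - α*(lam2^2+2*ζ) by linarith),
        mul_pos hα0 (show (0:ℝ) < 2*lamM - α*(lamM^2+2*ζ) by linarith)]
  -- symmetry facts
  have hsym : Lbarᵀ = Lbar := by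
    have h := hLbar.1
    simpa [Matrix.IsHermitian] using h
  have hLtsym : Ltilᵀ = Ltil := by
    have h := hLtil.1
    simpa [Matrix.IsHermitian] using h
  have hsymM : ((1 : Matrix (Fin m) (Fin m) ℝ) - α • Lbar)ᵀ = 1 - α • Lbar := by
    simp [Matrix.transpose_sub, Matrix.transpose_smul, hsym]
  rcases Nat.eq_zero_or_pos m with hm0 | hm0
  · subst hm0
    have hempty : {r : ℝ | ∃ x : Fin 0 → ℝ, (∑ i, (x i)^2) = 1 ∧
        r = Real.sqrt (∑ i, ((((1 - α • Lbar) ^ 2 + (2 * α ^ 2) • Ltil - Jmat 0) *ᵥ x) i)^2)}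
        = ∅ := by
      ext r; simp
    rw [specNorm, hempty, Real.sSup_empty]
    norm_num
  set A := (1 - α • Lbar) ^ 2 + (2 * α ^ 2) • Ltil - Jmat m with hA
  have hAsym : Aᵀ = A := by
    rw [hA, Matrix.transpose_sub, Matrix.transpose_add, Matrix.transpose_pow, hsymM,
      Matrix.transpose_smul, hLtsym]
    congr 1
  have hm : (0:ℝ) < m := by exact_mod_cast hm0
  -- quadratic form identity
  have hquad : ∀ z : Fin m → ℝ, z ⬝ᵥ (A *ᵥ z)
      = (∑ i, ((((1 : Matrix (Fin m) (Fin m) ℝ) - α • Lbar) *ᵥ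
          (fun j => z j - (∑ k, z k)/m)) i)^2) + 2 * α^2 * (z ⬝ᵥ (Ltil *ᵥ z)) := by
    intro z
    set s : ℝ := ∑ k, z k with hs
    set w : Fin m → ℝ := fun j => z j - s/m with hw
    have hwsum : ∑ j, w j = 0 := by
      simp only [hw, Finset.sum_sub_distrib, Finset.sum_const, Finset.card_univ,
        Fintype.card_fin, nsmul_eq_mul, ← hs]
      field_simp
      simp
    have hzw : z = w + (s/m) • (fun _ => (1:ℝ)) := by
      funext j; simp [hw]
    set M := (1 : Matrix (Fin m) (Fin m) ℝ) - α • Lbar with hM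
    have hone : M *ᵥ (fun _ => (1:ℝ)) = (fun _ => (1:ℝ)) := by
      rw [hM, Matrix.sub_mulVec, Matrix.one_mulVec, Matrix.smul_mulVec, hker, smul_zero,
        sub_zero]
    have hAz : A *ᵥ z = M *ᵥ (M *ᵥ z) + (2*α^2) • (Ltil *ᵥ z) - Jmat m *ᵥ z := by
      rw [hA, Matrix.sub_mulVec, Matrix.add_mulVec, Matrix.smul_mulVec, pow_two,
        ← Matrix.mulVec_mulVec]
    have hzMv : z ⬝ᵥ (M *ᵥ (M *ᵥ z)) = (M *ᵥ z) ⬝ᵥ (M *ᵥ z) := by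
      rw [Matrix.dotProduct_mulVec (v := z), ← Matrix.mulVec_transpose, hsymM]
    have hMz : M *ᵥ z = M *ᵥ w + (s/m) • (fun _ => (1:ℝ)) := by
      conv_lhs => rw [hzw]
      rw [Matrix.mulVec_add, Matrix.mulVec_smul, hone]
    have hMwsum : ∑ i, (M *ᵥ w) i = 0 := by
      rw [hM]
      simp only [Matrix.sub_mulVec, Matrix.one_mulVec, Matrix.smul_mulVec, Pi.sub_apply,
        Pi.smul_apply, smul_eq_mul]
      rw [Finset.sum_sub_distrib, hwsum, ← Finset.mul_sum, rowsum_zero Lbar hsym hker w,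
        mul_zero, sub_zero]
    have hdot1 : (M *ᵥ z) ⬝ᵥ (M *ᵥ z) = (∑ i, ((M *ᵥ w) i)^2) + s^2/m := by
      rw [hMz]
      simp only [dotProduct, Pi.add_apply, Pi.smul_apply, smul_eq_mul, mul_one]
      have expand : ∀ i : Fin m, ((M *ᵥ w) i + s/m) * ((M *ᵥ w) i + s/m)
          = ((M *ᵥ w) i)^2 + (2*(s/m))*((M *ᵥ w) i) + (s/m)^2 := fun i => by ring
      rw [Finset.sum_congr rfl fun i _ => expand i, Finset.sum_add_distrib,
        Finset.sum_add_distrib, ← Finset.mul_sum, hMwsum, mul_zero, add_zero, Finset.sum_const,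
        Finset.card_univ, Fintype.card_fin, nsmul_eq_mul]
      field_simp
    have hJz : (Jmat m) *ᵥ z = fun _ => s/m := by
      funext i
      show ∑ j, (1/(m:ℝ)) * z j = s/m
      rw [← Finset.mul_sum, ← hs]
      ring
    have hdotJ : z ⬝ᵥ ((Jmat m) *ᵥ z) = s^2/m := by
      rw [hJz]
      simp only [dotProduct]
      rw [← Finset.sum_mul, ← hs]
      field_simp
    rw [hAz, dotProduct_sub, dotProduct_add, dotProduct_smul, hzMv, hdot1,
      hdotJ]
    simp only [smul_eq_mul]
    ring
  -- upper and lower bounds on the quadratic form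
  have hub : ∀ z : Fin m → ℝ, z ⬝ᵥ (A *ᵥ z) ≤ cst * ∑ i, z i ^ 2 := by
    intro z
    rw [hquad z]
    set s : ℝ := ∑ k, z k with hs
    set w : Fin m → ℝ := fun j => z j - s/m with hw
    have hwsum : ∑ j, w j = 0 := by
      simp only [hw, Finset.sum_sub_distrib, Finset.sum_const, Finset.card_univ,
        Fintype.card_fin, nsmul_eq_mul, ← hs]
      field_simp
      simp
    have hsb := spectral_bound Lbar hLbar hker lam2 lamM hlam2 hspec α hα0.le μ
      (le_max_left _ _) (le_max_right _ _) w hwsum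
    have hwle : ∑ j, (w j)^2 ≤ ∑ j, z j ^ 2 := by
      have hexp : ∀ j : Fin m, (w j)^2 = z j ^2 - (2*(s/m)) * z j + (s/m)^2 := by
        intro j; rw [hw]; ring
      rw [Finset.sum_congr rfl fun j _ => hexp j, Finset.sum_add_distrib,
        Finset.sum_sub_distrib, ← Finset.mul_sum, ← hs, Finset.sum_const, Finset.card_univ,
        Fintype.card_fin, nsmul_eq_mul]
      have : (2*(s/m)) * s - (m:ℝ) * (s/m)^2 = s^2/m := by field_simp; ring
      nlinarith [sq_nonneg s, div_nonneg (sq_nonneg s) hm.le]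
    have hLt := quad_le_specNorm_s7 Ltil ζ hζspec z
    have hμw : μ * (∑ j, (w j)^2) ≤ μ * ∑ j, z j ^2 := by
      exact mul_le_mul_of_nonneg_left hwle hμ0
    have h2a : 2 * α^2 * (z ⬝ᵥ (Ltil *ᵥ z)) ≤ 2 * α^2 * (ζ * ∑ i, z i ^2) := by
      apply mul_le_mul_of_nonneg_left hLt (by positivity)
    rw [hcst]
    calc (∑ i, ((((1 : Matrix (Fin m) (Fin m) ℝ) - α • Lbar) *ᵥ w) i)^2)
          + 2 * α^2 * (z ⬝ᵥ (Ltil *ᵥ z))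
        ≤ μ * (∑ j, (w j)^2) + 2 * α^2 * (ζ * ∑ i, z i ^2) := by
          have := hsb
          linarith
      _ ≤ μ * (∑ j, z j ^2) + 2 * α^2 * (ζ * ∑ i, z i ^2) := by linarith
      _ = (μ + 2 * α^2 * ζ) * ∑ i, z i ^2 := by ring
  have hlb : ∀ z : Fin m → ℝ, 0 ≤ z ⬝ᵥ (A *ᵥ z) := by
    intro z
    rw [hquad z]
    have h1 : 0 ≤ ∑ i, ((((1 : Matrix (Fin m) (Fin m) ℝ) - α • Lbar) *ᵥ
        (fun j => z j - (∑ k, z k)/m)) i)^2 := Finset.sum_nonneg fun i _ => sq_nonneg _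
    have h2' : 0 ≤ z ⬝ᵥ (Ltil *ᵥ z) := by
      have := hLtil.dotProduct_mulVec_nonneg z
      simpa using this
    nlinarith [sq_nonneg α]
  -- conclude via sSup
  have hfrac : cst / (2 - cst) < 1 := by
    rw [div_lt_one (by linarith)]
    linarith
  have hfrac0 : 0 ≤ cst / (2 - cst) := div_nonneg hc0 (by linarith)
  refine lt_of_le_of_lt (Real.sSup_le ?_ (Real.sqrt_nonneg (cst/(2-cst)))) ?_
  · rintro r ⟨x, hx, rfl⟩
    apply Real.sqrt_le_sqrt
    set wv : Fin m → ℝ := A *ᵥ x with hwv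
    have hwn : ∑ i, (wv i)^2 = wv ⬝ᵥ (A *ᵥ x) := by
      simp only [dotProduct, ← hwv, pow_two]
    have hsymd : x ⬝ᵥ (A *ᵥ wv) = wv ⬝ᵥ (A *ᵥ x) := by
      rw [Matrix.dotProduct_mulVec (v := x), ← Matrix.mulVec_transpose, hAsym,
        dotProduct_comm]
    have hpol : 4 * (wv ⬝ᵥ (A *ᵥ x)) = (wv + x) ⬝ᵥ (A *ᵥ (wv + x))
        - (wv - x) ⬝ᵥ (A *ᵥ (wv - x)) := by
      simp only [Matrix.mulVec_add, Matrix.mulVec_sub, dotProduct_add,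
        dotProduct_sub, add_dotProduct, sub_dotProduct]
      linarith [hsymd]
    have e1 : ∑ i, ((wv + x) i)^2 = (∑ i, (wv i)^2) + 2*(∑ i, wv i * x i) + ∑ i, (x i)^2 := by
      have hp : ∀ i : Fin m, ((wv + x) i)^2 = (wv i)^2 + 2*(wv i * x i) + (x i)^2 := by
        intro i; simp only [Pi.add_apply]; ring
      rw [Finset.sum_congr rfl fun i _ => hp i, Finset.sum_add_distrib, Finset.sum_add_distrib,
        ← Finset.mul_sum]
    have e2 : ∑ i, ((wv - x) i)^2 = (∑ i, (wv i)^2) - 2*(∑ i, wv i * x i) + ∑ i, (x i)^2 := by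
      have hp : ∀ i : Fin m, ((wv - x) i)^2 = (wv i)^2 - 2*(wv i * x i) + (x i)^2 := by
        intro i; simp only [Pi.sub_apply]; ring
      rw [Finset.sum_congr rfl fun i _ => hp i, Finset.sum_add_distrib, Finset.sum_sub_distrib,
        ← Finset.mul_sum]
    have h1 := hub (wv + x)
    have hP2 := hlb (wv - x)
    have hS2 : 0 ≤ cst * ∑ i, ((wv - x) i)^2 :=
      mul_nonneg hc0 (Finset.sum_nonneg fun i _ => sq_nonneg _)
    have hchain : 4 * (∑ i, (wv i)^2) ≤ 2 * cst * ((∑ i, (wv i)^2) + 1) := by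
      calc 4 * (∑ i, (wv i)^2) = 4 * (wv ⬝ᵥ (A *ᵥ x)) := by rw [hwn]
        _ = (wv + x) ⬝ᵥ (A *ᵥ (wv + x)) - (wv - x) ⬝ᵥ (A *ᵥ (wv - x)) := hpol
        _ ≤ cst * (∑ i, ((wv + x) i)^2) + cst * (∑ i, ((wv - x) i)^2) := by linarith
        _ = 2 * cst * ((∑ i, (wv i)^2) + ∑ i, (x i)^2) := by rw [e1, e2]; ring
        _ = 2 * cst * ((∑ i, (wv i)^2) + 1) := by rw [hx]
    rw [le_div_iff₀ (by linarith : (0:ℝ) < 2 - cst)]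
    nlinarith [hchain]
  · calc Real.sqrt (cst/(2-cst)) < Real.sqrt 1 := Real.sqrt_lt_sqrt hfrac0 hfrac
      _ = 1 := Real.sqrt_one

end
end
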